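/- The code C of Construction 6 has the (h,d)-optimal access property for all h ≤ r and k ≤ d ≤ n − h simultaneously: let 1 ≤ h ≤ r and k ≤ d ≤ n − h, let f_1,…,f_h ∈ {1,…,n} be distinct failed node indices, and let R ⊆ {1,…,n}∖{f_1,…,f_h} with |R| = d. If (C_1,…,C_n) and (C'_1,…,C'_n) are codewords of C satisfying c_{v,a} = c'_{v,a} for every v ∈ R and every digit string a for which there exists i ∈ {1,…,h} with (d − k + i) dividing a_{f_i}, then C_{f_i} = C'_{f_i} for all i ∈ {1,…,h}. (By the counting identity, the number of coordinates accessed in each helper equals hl/(h+d−k), meeting the cut-set bound.) -/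

import Mathlib

open Matrix

private lemma core0 {F : Type*} [Field F] {n s : ℕ} (hs0 : 0 < s)
    (A : Fin n → Matrix (Fin n → Fin s) (Fin n → Fin s) F)
    (lam : Fin n → Fin s → F) (fc : Fin n → ℕ → ℕ → F)
    (hstep : ∀ (i : Fin n) (x : (Fin n → Fin s) → F) (a : Fin n → Fin s),
      (A i *ᵥ x) a = lam i (a i) * x (Function.update a i ⟨((a i : ℕ) + 1) % s, Nat.mod_lt _ hs0⟩))
    (hpow : ∀ (i : Fin n) (t : ℕ) (x : (Fin n → Fin s) → F) (a : Fin n → Fin s),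
      (A i ^ t *ᵥ x) a = fc i (a i : ℕ) t * x (Function.update a i ⟨((a i : ℕ) + t) % s, Nat.mod_lt _ hs0⟩))
    (hfc : ∀ i u t, fc i u t ≠ 0)
    (hcomm : ∀ i j, Commute (A i) (A j))
    (hinj : ∀ i j, i ≠ j → ∀ u : (Fin n → Fin s) → F, (A i - A j) *ᵥ u = 0 → u = 0) :
    ∀ (q : ℕ) (e : ℕ) (g : Fin q → Fin n), Function.Injective g →
      ∀ Y : Fin q → (Fin n → Fin s) → F,
      (∀ t, t < e + q → ∀ a : Fin n → Fin s,
        (∃ j : Fin q, (e + (j : ℕ) + 1) ∣ ((a (g j) : ℕ))) →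
        (∑ j, (A (g j) ^ t *ᵥ Y j) a) = 0) →
      ∀ j, Y j = 0 := by
  intro q
  induction q with
  | zero => exact fun e g hg Y heq j => j.elim0
  | succ q IH =>
    intro e g hg Y heq
    set i0 := g (Fin.last q) with hi0
    have hgc : ∀ j : Fin q, g j.castSucc ≠ i0 := by
      intro j hj
      have := hg hj
      have : (j : ℕ) = q := by
        simpa [Fin.ext_iff] using this
      omega
    -- term identity
    have hterm : ∀ (i : Fin n) (X : (Fin n → Fin s) → F) (t : ℕ) (a : Fin n → Fin s),
        ((A i) ^ t *ᵥ ((A i - A i0) *ᵥ X)) a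
          = ((A i) ^ (t+1) *ᵥ X) a - (A i0 *ᵥ ((A i) ^ t *ᵥ X)) a := by
      intro i X t a
      rw [Matrix.mulVec_mulVec, Matrix.mulVec_mulVec]
      have hm : (A i) ^ t * (A i - A i0) = (A i) ^ (t+1) - A i0 * (A i) ^ t := by
        rw [mul_sub, ← pow_succ, ← ((hcomm i0 i).pow_right t).eq]
      rw [hm, Matrix.sub_mulVec]
      rfl
    have heq' : ∀ t, t < e + q → ∀ a : Fin n → Fin s,
        (∃ j : Fin q, (e + (j : ℕ) + 1) ∣ ((a (g j.castSucc) : ℕ))) →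
        (∑ j : Fin q, ((A (g j.castSucc)) ^ t *ᵥ ((A (g j.castSucc) - A i0) *ᵥ Y j.castSucc)) a) = 0 := by
      intro t ht a ha
      have hgood : ∃ j : Fin (q+1), (e + (j : ℕ) + 1) ∣ ((a (g j) : ℕ)) := by
        obtain ⟨j, hj⟩ := ha
        exact ⟨j.castSucc, by simpa using hj⟩
      have hgood' : ∃ j : Fin (q+1), (e + (j : ℕ) + 1) ∣
          (((Function.update a i0 ⟨((a i0 : ℕ) + 1) % s, Nat.mod_lt _ hs0⟩) (g j) : ℕ)) := by
        obtain ⟨j, hj⟩ := ha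
        refine ⟨j.castSucc, ?_⟩
        rw [Function.update_of_ne (hgc j)]
        simpa using hj
      have hsum : ∑ j : Fin (q+1), ((A (g j)) ^ t *ᵥ ((A (g j) - A i0) *ᵥ Y j)) a = 0 := by
        rw [Finset.sum_congr rfl (fun j _ => hterm (g j) (Y j) t a), Finset.sum_sub_distrib,
          heq (t+1) (by omega) a hgood]
        have hfac : ∑ j : Fin (q+1), (A i0 *ᵥ ((A (g j)) ^ t *ᵥ Y j)) a
            = lam i0 (a i0) * ∑ j : Fin (q+1),
              ((A (g j)) ^ t *ᵥ Y j) (Function.update a i0 ⟨((a i0 : ℕ) + 1) % s, Nat.mod_lt _ hs0⟩) := by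
          rw [Finset.mul_sum]
          exact Finset.sum_congr rfl (fun j _ => hstep i0 _ a)
        rw [hfac, heq t (by omega) _ hgood', mul_zero, sub_zero]
      rw [Fin.sum_univ_castSucc] at hsum
      have hlast : ((A (g (Fin.last q))) ^ t *ᵥ ((A (g (Fin.last q)) - A i0) *ᵥ Y (Fin.last q))) a = 0 := by
        rw [← hi0, sub_self, Matrix.zero_mulVec, Matrix.mulVec_zero]
        rfl
      rw [hlast, add_zero] at hsum
      exact hsum
    have hY0 : ∀ j : Fin q, Y j.castSucc = 0 := by
      have hY' := IH e (g ∘ Fin.castSucc) (hg.comp (Fin.castSucc_injective q))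
        (fun j => (A (g j.castSucc) - A i0) *ᵥ Y j.castSucc) heq'
      exact fun j => hinj _ _ (hgc j) _ (hY' j)
    have hYlast : Y (Fin.last q) = 0 := by
      funext b
      set gl := g (Fin.last q) with hgl
      set p := e + q + 1 with hp
      have hple : (b gl : ℕ) / p * p ≤ (b gl : ℕ) := Nat.div_mul_le_self _ _
      have hcs : (b gl : ℕ) / p * p < s := lt_of_le_of_lt hple (b gl).isLt
      set c : ℕ := (b gl : ℕ) / p * p with hc
      set t := (b gl : ℕ) % p with htd
      have htp : t < p := Nat.mod_lt _ (by omega)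
      set a : Fin n → Fin s := Function.update b gl ⟨c, hcs⟩ with hadef
      have hagl : (a gl : ℕ) = c := by
        simp [hadef]
      have hct : c + t = (b gl : ℕ) := by
        rw [hc, htd, Nat.mul_comm]
        exact Nat.div_add_mod _ _
      have hgood : ∃ j : Fin (q+1), (e + (j : ℕ) + 1) ∣ ((a (g j) : ℕ)) := by
        refine ⟨Fin.last q, ?_⟩
        rw [Fin.val_last, ← hgl, hagl, hc]
        exact dvd_mul_left p _
      have h0 := heq t (by omega) a hgood
      rw [Fin.sum_univ_castSucc] at h0
      rw [Finset.sum_eq_zero (fun j _ => by rw [hY0 j, Matrix.mulVec_zero]; rfl), zero_add] at h0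
      rw [hpow] at h0
      have hupd : Function.update a gl ⟨((a gl : ℕ) + t) % s, Nat.mod_lt _ hs0⟩ = b := by
        have hv : (⟨((a gl : ℕ) + t) % s, Nat.mod_lt _ hs0⟩ : Fin s) = b gl := by
          apply Fin.ext
          simp only [hagl]
          rw [hct]
          exact Nat.mod_eq_of_lt (b gl).isLt
        rw [hv, hadef, Function.update_idem, Function.update_eq_self]
      rw [hupd] at h0
      rcases mul_eq_zero.mp h0 with h | h
      · exact absurd h (hfc _ _ _)
      · exact h
    intro j
    exact Fin.lastCases hYlast hY0 j

private lemma coreL {F : Type*} [Field F] {n s : ℕ} (hs0 : 0 < s)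
    (A : Fin n → Matrix (Fin n → Fin s) (Fin n → Fin s) F)
    (lam : Fin n → Fin s → F) (fc : Fin n → ℕ → ℕ → F)
    (hstep : ∀ (i : Fin n) (x : (Fin n → Fin s) → F) (a : Fin n → Fin s),
      (A i *ᵥ x) a = lam i (a i) * x (Function.update a i ⟨((a i : ℕ) + 1) % s, Nat.mod_lt _ hs0⟩))
    (hpow : ∀ (i : Fin n) (t : ℕ) (x : (Fin n → Fin s) → F) (a : Fin n → Fin s),
      (A i ^ t *ᵥ x) a = fc i (a i : ℕ) t * x (Function.update a i ⟨((a i : ℕ) + t) % s, Nat.mod_lt _ hs0⟩))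
    (hfc : ∀ i u t, fc i u t ≠ 0)
    (hcomm : ∀ i j, Commute (A i) (A j))
    (hinj : ∀ i j, i ≠ j → ∀ u : (Fin n → Fin s) → F, (A i - A j) *ᵥ u = 0 → u = 0) :
    ∀ (m : ℕ) (q e : ℕ) (g : Fin q → Fin n), Function.Injective g →
      ∀ (w : Fin m → Fin n), (∀ (u : Fin m) (j : Fin q), w u ≠ g j) →
      ∀ (Y : Fin q → (Fin n → Fin s) → F) (E : Fin m → (Fin n → Fin s) → F),
      (∀ t, t < e + q + m → ∀ a : Fin n → Fin s,
        (∃ j : Fin q, (e + (j : ℕ) + 1) ∣ ((a (g j) : ℕ))) →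
        ((∑ j, (A (g j) ^ t *ᵥ Y j) a) + ∑ u, (A (w u) ^ t *ᵥ E u) a) = 0) →
      ∀ j, Y j = 0 := by
  intro m
  induction m with
  | zero =>
    intro q e g hg w hw Y E heq
    refine core0 hs0 A lam fc hstep hpow hfc hcomm hinj q e g hg Y (fun t ht a ha => ?_)
    have := heq t (by omega) a ha
    simpa using this
  | succ m IH =>
    intro q e g hg w hw Y E heq
    set v := w (Fin.last m) with hv
    have hterm : ∀ (i : Fin n) (X : (Fin n → Fin s) → F) (t : ℕ) (a : Fin n → Fin s),
        ((A i) ^ t *ᵥ ((A i - A v) *ᵥ X)) a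
          = ((A i) ^ (t+1) *ᵥ X) a - (A v *ᵥ ((A i) ^ t *ᵥ X)) a := by
      intro i X t a
      rw [Matrix.mulVec_mulVec, Matrix.mulVec_mulVec]
      have hm : (A i) ^ t * (A i - A v) = (A i) ^ (t+1) - A v * (A i) ^ t := by
        rw [mul_sub, ← pow_succ, ← ((hcomm v i).pow_right t).eq]
      rw [hm, Matrix.sub_mulVec]
      rfl
    have heq' : ∀ t, t < e + q + m → ∀ a : Fin n → Fin s,
        (∃ j : Fin q, (e + (j : ℕ) + 1) ∣ ((a (g j) : ℕ))) →
        ((∑ j, (A (g j) ^ t *ᵥ ((A (g j) - A v) *ᵥ Y j)) a)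
          + ∑ u : Fin m, (A (w u.castSucc) ^ t *ᵥ ((A (w u.castSucc) - A v) *ᵥ E u.castSucc)) a) = 0 := by
      intro t ht a ha
      set a' : Fin n → Fin s := Function.update a v ⟨((a v : ℕ) + 1) % s, Nat.mod_lt _ hs0⟩ with ha'
      have hgood' : ∃ j : Fin q, (e + (j : ℕ) + 1) ∣ ((a' (g j) : ℕ)) := by
        obtain ⟨j, hj⟩ := ha
        refine ⟨j, ?_⟩
        rw [ha', Function.update_of_ne (Ne.symm (hw (Fin.last m) j))]
        exact hj
      have hbig : ((∑ j, (A (g j) ^ t *ᵥ ((A (g j) - A v) *ᵥ Y j)) a)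
          + ∑ u : Fin (m+1), (A (w u) ^ t *ᵥ ((A (w u) - A v) *ᵥ E u)) a) = 0 := by
        rw [Finset.sum_congr rfl (fun j _ => hterm (g j) (Y j) t a),
          Finset.sum_congr rfl (fun u _ => hterm (w u) (E u) t a),
          Finset.sum_sub_distrib, Finset.sum_sub_distrib]
        have hrearr : ∀ (p1 p2 p3 p4 : F), (p1 - p2) + (p3 - p4) = (p1 + p3) - (p2 + p4) := by
          intros; ring
        rw [hrearr, heq (t+1) (by omega) a ha]
        have hfac1 : ∑ j, (A v *ᵥ ((A (g j)) ^ t *ᵥ Y j)) a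
            = lam v (a v) * ∑ j, ((A (g j)) ^ t *ᵥ Y j) a' := by
          rw [Finset.mul_sum]
          exact Finset.sum_congr rfl (fun j _ => hstep v _ a)
        have hfac2 : ∑ u : Fin (m+1), (A v *ᵥ ((A (w u)) ^ t *ᵥ E u)) a
            = lam v (a v) * ∑ u : Fin (m+1), ((A (w u)) ^ t *ᵥ E u) a' := by
          rw [Finset.mul_sum]
          exact Finset.sum_congr rfl (fun u _ => hstep v _ a)
        rw [hfac1, hfac2, ← mul_add, heq t (by omega) a' hgood', mul_zero, zero_sub, neg_eq_zero]
      rw [Fin.sum_univ_castSucc (f := fun u : Fin (m+1) => (A (w u) ^ t *ᵥ ((A (w u) - A v) *ᵥ E u)) a)] at hbig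
      have hlast : (A (w (Fin.last m)) ^ t *ᵥ ((A (w (Fin.last m)) - A v) *ᵥ E (Fin.last m))) a = 0 := by
        rw [← hv, sub_self, Matrix.zero_mulVec, Matrix.mulVec_zero]
        rfl
      rw [hlast, add_zero] at hbig
      exact hbig
    have hY' := IH q e g hg (w ∘ Fin.castSucc) (fun u j => hw u.castSucc j)
      (fun j => (A (g j) - A v) *ᵥ Y j) (fun u => (A (w u.castSucc) - A v) *ᵥ E u.castSucc) heq'
    exact fun j => hinj _ _ (Ne.symm (hw (Fin.last m) j)) _ (hY' j)

open Matrix in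
/-- Construction 6 (permutation-type code with `s = lcm(1,…,r)`) has the
`(h,d)`-optimal access property for all `h ≤ r` and `k ≤ d ≤ n - h`
simultaneously: the `h` failed nodes `f_1,…,f_h` are determined by the
coordinates `{c_{v,a} : ∃ i, (d-k+i) ∣ a_{f_i}}` accessed in any `d` helpers. -/
theorem construction6_hd_optimal_access
    (F : Type*) [Field F] [Fintype F]
    (n r s : ℕ) (hr : 1 ≤ r) (hrn : r < n)
    (hs : s = (Finset.Icc 1 r).lcm id)
    (hF : n + 1 ≤ Fintype.card F)
    (γ : F) (hγprim : ∀ x : F, x ≠ 0 → ∃ m : ℕ, x = γ ^ m)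
    (lam : Fin n → Fin s → F)
    (hlam : ∀ (i : Fin n) (u : Fin s),
      lam i u = if (u : ℕ) = 0 then γ ^ ((i : ℕ) + 1) else 1)
    (A : Fin n → Matrix (Fin n → Fin s) (Fin n → Fin s) F)
    (hA : ∀ i : Fin n,
      A i = Matrix.of fun a b : Fin n → Fin s =>
        if b = Function.update a i
            ⟨((a i : ℕ) + 1) % s, Nat.mod_lt _ (a i).pos⟩
        then lam i (a i) else 0)
    (C C' : Fin n → (Fin n → Fin s) → F)
    (hC : ∀ t < r, ∑ i, (A i ^ t) *ᵥ C i = 0)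
    (hC' : ∀ t < r, ∑ i, (A i ^ t) *ᵥ C' i = 0)
    (h d : ℕ) (hh1 : 1 ≤ h) (hhr : h ≤ r) (hd1 : n - r ≤ d) (hd2 : d ≤ n - h)
    (f : Fin h → Fin n) (hf : Function.Injective f)
    (R : Finset (Fin n)) (hR : R.card = d)
    (hdisj : ∀ i : Fin h, f i ∉ R)
    (hrep : ∀ v ∈ R, ∀ a : Fin n → Fin s,
      (∃ i : Fin h, (d - (n - r) + (i : ℕ) + 1) ∣ (a (f i) : ℕ)) →
      C v a = C' v a) :
    ∀ i : Fin h, C (f i) = C' (f i) := by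
  classical
  -- s is positive
  have hs0 : 0 < s := by
    rw [hs]
    rcases Nat.eq_zero_or_pos ((Finset.Icc 1 r).lcm id) with h0 | h0
    · exfalso
      rw [Finset.lcm_eq_zero_iff] at h0
      obtain ⟨x, hx, hx0⟩ := h0
      rw [Finset.mem_Icc] at hx
      simp only [id] at hx0
      omega
    · exact h0
  -- γ is nonzero
  have hγ0 : γ ≠ 0 := by
    intro h0
    have hlt : ({0, 1} : Finset F).card < (Finset.univ : Finset F).card := by
      have h2 : ({0, 1} : Finset F).card ≤ 2 :=
        (Finset.card_insert_le _ _).trans (by simp)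
      rw [Finset.card_univ]
      omega
    have hne2 : ({0, 1} : Finset F) ≠ Finset.univ := by
      intro huniv
      rw [huniv] at hlt
      omega
    obtain ⟨x, -, hx⟩ := Finset.exists_of_ssubset (Finset.ssubset_univ_iff.mpr hne2)
    simp only [Finset.mem_insert, Finset.mem_singleton, not_or] at hx
    obtain ⟨hx0, hx1⟩ := hx
    obtain ⟨mm, hmm⟩ := hγprim x hx0
    subst h0
    rcases mm with - | mm
    · rw [pow_zero] at hmm; exact hx1 hmm
    · rw [zero_pow (Nat.succ_ne_zero mm)] at hmm; exact hx0 hmm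
  -- distinct powers of γ
  have hpowdist : ∀ i j : ℕ, 1 ≤ i → i < j → j ≤ n → γ ^ i ≠ γ ^ j := by
    intro i j hi hij hjn hEq
    have hc1 : γ ^ (j - i) = 1 := by
      have h1 : γ ^ i * γ ^ (j - i) = γ ^ i * 1 := by
        rw [mul_one, ← pow_add, show i + (j - i) = j by omega]
        exact hEq.symm
      exact mul_left_cancel₀ (pow_ne_zero i hγ0) h1
    set c := j - i with hcdef
    have hc0 : 0 < c := by omega
    have hcn : c < n := by omega
    set T : Finset F := (Finset.range c).image (γ ^ ·) with hT
    have hsub : Finset.univ.erase (0 : F) ⊆ T := by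
      intro x hx
      have hx0 : x ≠ 0 := (Finset.mem_erase.mp hx).1
      obtain ⟨mm, hmm⟩ := hγprim x hx0
      rw [hT, Finset.mem_image]
      refine ⟨mm % c, Finset.mem_range.mpr (Nat.mod_lt _ hc0), ?_⟩
      rw [← Nat.div_add_mod mm c, pow_add, pow_mul, hc1, one_pow, one_mul] at hmm
      exact hmm.symm
    have hcard := Finset.card_le_card hsub
    have hTc : T.card ≤ c := Finset.card_image_le.trans (by simp)
    rw [Finset.card_erase_of_mem (Finset.mem_univ _), Finset.card_univ] at hcard
    omega
  -- entry formula for A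
  have hAe : ∀ (i : Fin n) (a b : Fin n → Fin s),
      A i a b = if b = Function.update a i ⟨((a i : ℕ) + 1) % s, Nat.mod_lt _ hs0⟩
        then lam i (a i) else 0 := by
    intro i a b
    rw [hA i]
    rfl
  -- single-step evaluation
  have hstep : ∀ (i : Fin n) (x : (Fin n → Fin s) → F) (a : Fin n → Fin s),
      (A i *ᵥ x) a = lam i (a i) *
        x (Function.update a i ⟨((a i : ℕ) + 1) % s, Nat.mod_lt _ hs0⟩) := by
    intro i x a
    simp only [Matrix.mulVec, dotProduct, hAe, ite_mul, zero_mul]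
    simp
  -- power evaluation
  have hpow : ∀ (i : Fin n) (t : ℕ) (x : (Fin n → Fin s) → F) (a : Fin n → Fin s),
      (A i ^ t *ᵥ x) a =
        (∏ j ∈ Finset.range t, if ((a i : ℕ) + j) % s = 0 then γ ^ ((i : ℕ) + 1) else 1)
          * x (Function.update a i ⟨((a i : ℕ) + t) % s, Nat.mod_lt _ hs0⟩) := by
    intro i t
    induction t with
    | zero =>
      intro x a
      simp only [pow_zero, Matrix.one_mulVec, Finset.range_zero, Finset.prod_empty, one_mul,
        Nat.add_zero]
      have hv : (⟨(a i : ℕ) % s, Nat.mod_lt _ hs0⟩ : Fin s) = a i :=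
        Fin.ext (Nat.mod_eq_of_lt (a i).isLt)
      rw [hv, Function.update_eq_self]
    | succ t IHt =>
      intro x a
      rw [pow_succ, ← Matrix.mulVec_mulVec, IHt (A i *ᵥ x) a, hstep]
      simp only [Function.update_self, Function.update_idem]
      have hv : (⟨(((a i : ℕ) + t) % s + 1) % s, Nat.mod_lt _ hs0⟩ : Fin s)
          = ⟨((a i : ℕ) + (t + 1)) % s, Nat.mod_lt _ hs0⟩ :=
        Fin.ext (Nat.mod_add_mod _ _ _)
      rw [hv, Finset.prod_range_succ, hlam]
      simp only []
      ring
  -- product of coefficients over a full cycle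
  have hcyc : ∀ (i : Fin n) (u : ℕ), u < s →
      (∏ j ∈ Finset.range s, if (u + j) % s = 0 then γ ^ ((i : ℕ) + 1) else 1)
        = γ ^ ((i : ℕ) + 1) := by
    intro i u hu
    rcases Nat.eq_zero_or_pos u with rfl | hu0
    · have hother : ∀ j ∈ Finset.range s, j ≠ 0 →
          (if ((0:ℕ) + j) % s = 0 then γ ^ ((i : ℕ) + 1) else 1) = 1 := by
        intro j hj hne
        rw [Finset.mem_range] at hj
        exact if_neg (by rw [Nat.zero_add, Nat.mod_eq_of_lt hj]; exact hne)
      rw [Finset.prod_eq_single_of_mem 0 (Finset.mem_range.mpr hs0) hother]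
      simp
    · have hother : ∀ j ∈ Finset.range s, j ≠ s - u →
          (if (u + j) % s = 0 then γ ^ ((i : ℕ) + 1) else 1) = 1 := by
        intro j hj hne
        rw [Finset.mem_range] at hj
        refine if_neg ?_
        rcases lt_or_ge (u + j) s with hlt | hge
        · rw [Nat.mod_eq_of_lt hlt]; omega
        · have h2 : (u + j) % s = u + j - s := by
            rw [Nat.mod_eq_sub_mod hge, Nat.mod_eq_of_lt (by omega)]
          rw [h2]; omega
      rw [Finset.prod_eq_single_of_mem (s - u) (Finset.mem_range.mpr (by omega)) hother]
      rw [if_pos (by rw [show u + (s - u) = s by omega, Nat.mod_self])]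
  -- coefficients are nonzero
  have hfc0 : ∀ (i : Fin n) (u t : ℕ),
      (∏ j ∈ Finset.range t, if (u + j) % s = 0 then γ ^ ((i : ℕ) + 1) else 1) ≠ 0 := by
    intro i u t
    refine Finset.prod_ne_zero_iff.mpr (fun j _ => ?_)
    split
    · exact pow_ne_zero _ hγ0
    · exact one_ne_zero
  -- A i ^ s acts as multiplication by γ^(i+1)
  have hAs : ∀ (i : Fin n) (x : (Fin n → Fin s) → F) (a : Fin n → Fin s),
      (A i ^ s *ᵥ x) a = γ ^ ((i : ℕ) + 1) * x a := by
    intro i x a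
    have hv : (⟨((a i : ℕ) + s) % s, Nat.mod_lt _ hs0⟩ : Fin s) = a i := by
      apply Fin.ext
      show ((a i : ℕ) + s) % s = (a i : ℕ)
      rw [Nat.add_mod_right]
      exact Nat.mod_eq_of_lt (a i).isLt
    rw [hpow, hcyc i (a i : ℕ) (a i).isLt, hv, Function.update_eq_self]
  -- the matrices commute
  have hcomm : ∀ i j, Commute (A i) (A j) := by
    intro i j
    rcases eq_or_ne i j with rfl | hij
    · exact Commute.refl _
    · show A i * A j = A j * A i
      have hL : ∀ p q : Fin n, p ≠ q → ∀ a b : Fin n → Fin s, (A p * A q) a b =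
          if b = Function.update (Function.update a p ⟨((a p : ℕ) + 1) % s, Nat.mod_lt _ hs0⟩)
              q ⟨((a q : ℕ) + 1) % s, Nat.mod_lt _ hs0⟩
          then lam p (a p) * lam q (a q) else 0 := by
        intro p q hpq a b
        rw [Matrix.mul_apply]
        rw [Finset.sum_eq_single
          (Function.update a p ⟨((a p : ℕ) + 1) % s, Nat.mod_lt _ hs0⟩)]
        · rw [hAe, hAe, if_pos rfl, Function.update_of_ne hpq.symm, mul_ite, mul_zero]
        · intro x _ hx
          rw [hAe, if_neg hx, zero_mul]
        · intro hc
          exact absurd (Finset.mem_univ _) hc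
      ext a b
      rw [hL i j hij a b, hL j i hij.symm a b, Function.update_comm hij,
        mul_comm (lam i (a i)) (lam j (a j))]
  -- differences of distinct A's are injective on vectors
  have hinj : ∀ i j, i ≠ j → ∀ u : (Fin n → Fin s) → F, (A i - A j) *ᵥ u = 0 → u = 0 := by
    intro i j hij u hu
    rw [Matrix.sub_mulVec] at hu
    have h1 : A i *ᵥ u = A j *ᵥ u := sub_eq_zero.mp hu
    have ht : ∀ t : ℕ, A i ^ t *ᵥ u = A j ^ t *ᵥ u := by
      intro t
      induction t with
      | zero => simp
      | succ t IHt =>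
        calc A i ^ (t + 1) *ᵥ u = A i *ᵥ (A i ^ t *ᵥ u) := by
              rw [Matrix.mulVec_mulVec, ← pow_succ']
          _ = A i *ᵥ (A j ^ t *ᵥ u) := by rw [IHt]
          _ = (A i * A j ^ t) *ᵥ u := Matrix.mulVec_mulVec ..
          _ = (A j ^ t * A i) *ᵥ u := by rw [((hcomm i j).pow_right t).eq]
          _ = A j ^ t *ᵥ (A i *ᵥ u) := (Matrix.mulVec_mulVec ..).symm
          _ = A j ^ t *ᵥ (A j *ᵥ u) := by rw [h1]
          _ = A j ^ (t + 1) *ᵥ u := by rw [Matrix.mulVec_mulVec, ← pow_succ]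
    have hne : γ ^ ((i : ℕ) + 1) ≠ γ ^ ((j : ℕ) + 1) := by
      have hvne : (i : ℕ) ≠ (j : ℕ) := fun hc => hij (Fin.ext hc)
      rcases lt_or_gt_of_ne hvne with hlt | hgt
      · exact hpowdist _ _ (by omega) (by omega) (by omega)
      · exact (hpowdist _ _ (by omega) (by omega) (by omega)).symm
    funext a
    have h2 := congrFun (ht s) a
    rw [hAs, hAs] at h2
    have h3 : (γ ^ ((i : ℕ) + 1) - γ ^ ((j : ℕ) + 1)) * u a = 0 := by
      rw [sub_mul, h2, sub_self]
    rcases mul_eq_zero.mp h3 with h4 | h4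
    · exact absurd h4 (sub_ne_zero.mpr hne)
    · exact h4
  -- the difference codeword
  set D : Fin n → (Fin n → Fin s) → F := fun i => C i - C' i with hDdef
  have hD : ∀ t, t < r → ∑ i, (A i ^ t) *ᵥ D i = 0 := by
    intro t ht
    have h1 : ∑ i, (A i ^ t) *ᵥ D i
        = ∑ i, ((A i ^ t) *ᵥ C i - (A i ^ t) *ᵥ C' i) :=
      Finset.sum_congr rfl fun i _ => Matrix.mulVec_sub _ _ _
    rw [h1, Finset.sum_sub_distrib, hC t ht, hC' t ht, sub_zero]
  -- node sets
  set Ff : Finset (Fin n) := Finset.image f Finset.univ with hFf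
  have hFfcard : Ff.card = h := by
    rw [hFf, Finset.card_image_of_injective _ hf, Finset.card_univ, Fintype.card_fin]
  have hdisjRF : Disjoint R Ff := by
    rw [Finset.disjoint_right]
    intro x hx hxR
    rw [hFf, Finset.mem_image] at hx
    obtain ⟨i, -, rfl⟩ := hx
    exact hdisj i hxR
  set W : Finset (Fin n) := Finset.univ \ (R ∪ Ff) with hW
  have hWcard : W.card = n - (d + h) := by
    rw [hW, Finset.card_sdiff_of_subset (Finset.subset_univ _), Finset.card_union_of_disjoint hdisjRF,
      hR, hFfcard, Finset.card_univ, Fintype.card_fin]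
  set m := W.card with hm
  set wfun : Fin m → Fin n := fun u => ((W.orderIsoOfFin hm.symm) u : Fin n) with hwfun
  have hwmem : ∀ u, wfun u ∈ W := fun u => ((W.orderIsoOfFin hm.symm) u).2
  have hwf : ∀ (u : Fin m) (j : Fin h), wfun u ≠ f j := by
    intro u j heqq
    have h1 := hwmem u
    rw [hW, Finset.mem_sdiff] at h1
    refine h1.2 (Finset.mem_union_right _ ?_)
    rw [heqq, hFf]
    exact Finset.mem_image_of_mem f (Finset.mem_univ j)
  have hWsum : ∀ (X : Fin n → F), ∑ v ∈ W, X v = ∑ u : Fin m, X (wfun u) := by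
    intro X
    rw [← Finset.sum_coe_sort W X]
    exact (Fintype.sum_equiv (W.orderIsoOfFin hm.symm).toEquiv _ _ (fun u => rfl)).symm
  -- the main system of equations
  have hmain : ∀ t, t < (d - (n - r)) + h + m → ∀ a : Fin n → Fin s,
      (∃ i : Fin h, (d - (n - r) + (i : ℕ) + 1) ∣ (a (f i) : ℕ)) →
      ((∑ j : Fin h, (A (f j) ^ t *ᵥ D (f j)) a)
        + ∑ u : Fin m, (A (wfun u) ^ t *ᵥ D (wfun u)) a) = 0 := by
    intro t ht a ha
    have htr : t < r := by omega
    have htotal : ∑ i, (A i ^ t *ᵥ D i) a = 0 := by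
      have h1 := congrFun (hD t htr) a
      simpa using h1
    have hsplit := Finset.sum_sdiff (f := fun i => (A i ^ t *ᵥ D i) a)
      (Finset.subset_univ (R ∪ Ff))
    rw [Finset.sum_union hdisjRF, htotal] at hsplit
    have hRzero : ∑ v ∈ R, (A v ^ t *ᵥ D v) a = 0 := by
      refine Finset.sum_eq_zero (fun v hv => ?_)
      rw [hpow v t (D v) a]
      have hDz : D v (Function.update a v ⟨((a v : ℕ) + t) % s, Nat.mod_lt _ hs0⟩) = 0 := by
        have hgood : ∃ i : Fin h, (d - (n - r) + (i : ℕ) + 1) ∣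
            ((Function.update a v ⟨((a v : ℕ) + t) % s, Nat.mod_lt _ hs0⟩ (f i) : ℕ)) := by
          obtain ⟨i, hi⟩ := ha
          refine ⟨i, ?_⟩
          rw [Function.update_of_ne (fun hc : f i = v => hdisj i (hc ▸ hv))]
          exact hi
        have := hrep v hv _ hgood
        rw [hDdef]
        simp [this]
      rw [hDz, mul_zero]
    rw [hRzero, zero_add] at hsplit
    have hFsum : ∑ v ∈ Ff, (A v ^ t *ᵥ D v) a = ∑ j : Fin h, (A (f j) ^ t *ᵥ D (f j)) a := by
      rw [hFf]
      exact Finset.sum_image (fun x _ y _ hxy => hf hxy)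
    have hWs : ∑ v ∈ W, (A v ^ t *ᵥ D v) a = ∑ u : Fin m, (A (wfun u) ^ t *ᵥ D (wfun u)) a :=
      hWsum _
    rw [← hW] at hsplit
    rw [← hFsum, ← hWs, add_comm]
    exact hsplit
  -- apply the elimination machinery
  have hZ := coreL hs0 A lam
    (fun i u t => ∏ j ∈ Finset.range t, if (u + j) % s = 0 then γ ^ ((i : ℕ) + 1) else 1)
    hstep hpow hfc0 hcomm hinj m h (d - (n - r)) f hf wfun hwf
    (fun j => D (f j)) (fun u => D (wfun u)) hmain
  intro i
  have h1 : D (f i) = 0 := hZ i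
  rw [hDdef] at h1
  exact sub_eq_zero.mp h1
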